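/- arXiv:0901.2139 — 2 statements merged into one kernel-verified Lean document; each statement's English description precedes it below -/
import Mathlib

section
/- The closure K of the union over all n ∈ ℕ of the sets EFix(fⁿ, α, ℓ) is a uniformly expanding set; moreover for every n ∈ ℕ, Fix(fⁿ) ∩ K ∩ EFix(fⁿ) = EFix(fⁿ, α, ℓ). -/
open Filter Topology

variable {E : Type*} [NormedAddCommGroup E] [NormedSpace ℝ E]

/-- The conorm (minimum norm) `‖A⁻¹‖⁻¹` of a continuous linear map `A`. -/
noncomputable def conorm (A : E →L[ℝ] E) : ℝ :=
  sInf {r | ∃ v : E, ‖v‖ = 1 ∧ r = ‖A v‖}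

/-- `EFixSet f n α ℓ`: fixed points `x` of `f^[n]` with
`‖(df^k(f^i x))⁻¹‖⁻¹ ≥ (1/ℓ) e^{kα}` for all `k ∈ ℕ` and `0 ≤ i ≤ n-1`. -/
def EFixSet (f : E → E) (n : ℕ) (α : ℝ) (ℓ : ℕ) : Set E :=
  {x | f^[n] x = x ∧ ∀ k : ℕ, ∀ i < n,
    (1 / (ℓ : ℝ)) * Real.exp (k * α) ≤ conorm (fderiv ℝ (f^[k]) (f^[i] x))}

/-- The set `Λ_{α,ℓ}` of points with uniform expansion estimates along the forward orbit. -/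
def LambdaSet (f : E → E) (α : ℝ) (ℓ : ℕ) : Set E :=
  {x | ∀ k : ℕ, (1 / (ℓ : ℝ)) * Real.exp (k * α) ≤ conorm (fderiv ℝ (f^[k]) x)}

/-- The smallest Lyapunov exponent at a point `x`. -/
noncomputable def lyapMin (f : E → E) (x : E) : ℝ :=
  Filter.atTop.limsup (fun k : ℕ => Real.log (conorm (fderiv ℝ (f^[k]) x)) / k)

/-- `K = K_{α,ℓ}`: the closure of the union over `n ≥ 1` of the sets `EFix(fⁿ,α,ℓ)`. -/
def Kset (f : E → E) (α : ℝ) (ℓ : ℕ) : Set E :=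
  closure (⋃ n : ℕ, EFixSet f (n + 1) α ℓ)

lemma conorm_bddBelow (A : E →L[ℝ] E) : BddBelow {r | ∃ v : E, ‖v‖ = 1 ∧ r = ‖A v‖} :=
  ⟨0, by rintro r ⟨v, hv, rfl⟩; exact norm_nonneg _⟩

lemma conorm_le (A : E →L[ℝ] E) {v : E} (hv : ‖v‖ = 1) : conorm A ≤ ‖A v‖ :=
  csInf_le (conorm_bddBelow A) ⟨v, hv, rfl⟩

lemma conorm_le_norm (A : E →L[ℝ] E) {v : E} (hv : ‖v‖ = 1) : conorm A ≤ ‖A‖ :=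
  (conorm_le A hv).trans (by simpa [hv] using A.le_opNorm v)

lemma conorm_eq_zero (h : ¬ ∃ v : E, ‖v‖ = 1) (A : E →L[ℝ] E) : conorm A = 0 := by
  have : {r | ∃ v : E, ‖v‖ = 1 ∧ r = ‖A v‖} = ∅ := by
    ext r; simp only [Set.mem_setOf_eq, Set.mem_empty_iff_false, iff_false]
    rintro ⟨v, hv, _⟩; exact h ⟨v, hv⟩
  rw [conorm, this, Real.sInf_empty]

lemma conorm_continuous : Continuous (conorm : (E →L[ℝ] E) → ℝ) := by
  by_cases h : ∃ v : E, ‖v‖ = 1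
  · obtain ⟨v₀, hv₀⟩ := h
    have key : ∀ A B : E →L[ℝ] E, conorm A ≤ conorm B + ‖A - B‖ := by
      intro A B
      have h1 : conorm A - ‖A - B‖ ≤ conorm B := by
        have hne : {r | ∃ v : E, ‖v‖ = 1 ∧ r = ‖B v‖}.Nonempty := ⟨‖B v₀‖, v₀, hv₀, rfl⟩
        apply le_csInf hne
        rintro r ⟨v, hv, rfl⟩
        have h2 : ‖A v‖ ≤ ‖B v‖ + ‖A - B‖ := by
          have e : A v = B v + (A - B) v := by simp
          calc ‖A v‖ = ‖B v + (A - B) v‖ := by rw [← e]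
            _ ≤ ‖B v‖ + ‖(A - B) v‖ := norm_add_le _ _
            _ ≤ ‖B v‖ + ‖A - B‖ := by
                have := (A - B).le_opNorm v
                rw [hv, mul_one] at this
                linarith
        have := conorm_le A hv
        linarith
      linarith
    have lip : LipschitzWith 1 (conorm : (E →L[ℝ] E) → ℝ) := by
      apply LipschitzWith.of_dist_le_mul
      intro A B
      rw [NNReal.coe_one, one_mul, Real.dist_eq, dist_eq_norm, abs_sub_le_iff]
      constructor
      · have := key A B; linarith
      · have := key B A; rw [norm_sub_rev] at this; linarith
    exact lip.continuous
  · have : (conorm : (E →L[ℝ] E) → ℝ) = fun _ => 0 := funext (conorm_eq_zero h)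
    rw [this]; exact continuous_const

lemma contDiff_iterate (f : E → E) (hf : ContDiff ℝ 1 f) (k : ℕ) : ContDiff ℝ 1 (f^[k]) := by
  induction k with
  | zero => simpa using contDiff_id
  | succ k ih => rw [Function.iterate_succ']; exact hf.comp ih

/-- `EFixSet` is mapped into itself by `f`. -/
lemma efix_mapsTo (f : E → E) (m : ℕ) (α : ℝ) (ℓ : ℕ) :
    Set.MapsTo f (EFixSet f m α ℓ) (EFixSet f m α ℓ) := by
  intro x hx
  obtain ⟨hfix, hbd⟩ := hx
  constructor
  · calc f^[m] (f x) = f (f^[m] x) := by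
          rw [← Function.iterate_succ_apply, Function.iterate_succ_apply']
    _ = f x := by rw [hfix]
  · intro k i hi
    have e : f^[i] (f x) = f^[i + 1] x := by rw [← Function.iterate_succ_apply]
    rcases lt_or_eq_of_le (Nat.succ_le_of_lt hi) with h | h
    · rw [e]; exact hbd k (i + 1) h
    · subst h
      have : f^[i] (f x) = f^[0] x := by
        rw [e]; simpa using hfix
      rw [this]
      exact hbd k 0 (by omega)

/-- positivity of the Lyapunov exponent on `EFixSet`. -/
lemma lyap_ge (f : E → E) (hf : ContDiff ℝ 1 f) {α : ℝ} (hα : 0 < α) {ℓ : ℕ} (hℓ : 1 ≤ ℓ)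
    {n : ℕ} (hn : 1 ≤ n) {x : E} (hx : x ∈ EFixSet f n α ℓ) : α ≤ lyapMin f x := by
  obtain ⟨hfix, hbd⟩ := hx
  have hℓpos : (0 : ℝ) < 1 / (ℓ : ℝ) := by positivity
  have hbd0 : ∀ k : ℕ, (1 / (ℓ : ℝ)) * Real.exp (k * α) ≤ conorm (fderiv ℝ (f^[k]) x) := by
    intro k
    have := hbd k 0 (by omega)
    simpa using this
  have hpos : ∀ k : ℕ, 0 < conorm (fderiv ℝ (f^[k]) x) := fun k =>
    lt_of_lt_of_le (by positivity) (hbd0 k)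
  -- a unit vector exists
  have hv : ∃ v : E, ‖v‖ = 1 := by
    by_contra h
    have := hpos 0
    rw [conorm_eq_zero h] at this
    exact lt_irrefl 0 this
  obtain ⟨v, hvn⟩ := hv
  -- bound the norms of the derivatives along the (periodic) orbit
  have hne : (Finset.range n).Nonempty := Finset.nonempty_range_iff.mpr (by omega)
  set M : ℝ := max 1 ((Finset.range n).sup' hne fun i => ‖fderiv ℝ f (f^[i] x)‖) with hM
  have hM1 : (1 : ℝ) ≤ M := le_max_left _ _
  have hMi : ∀ i < n, ‖fderiv ℝ f (f^[i] x)‖ ≤ M := by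
    intro i hi
    exact le_trans (Finset.le_sup' (fun i => ‖fderiv ℝ f (f^[i] x)‖) (Finset.mem_range.mpr hi)) (le_max_right _ _)
  have hper : Function.IsPeriodicPt f n x := hfix
  have hnorm : ∀ k : ℕ, ‖fderiv ℝ (f^[k]) x‖ ≤ M ^ k := by
    intro k
    induction k with
    | zero =>
        simpa using ContinuousLinearMap.norm_id_le
    | succ k ih =>
        have hcomp : fderiv ℝ (f^[k + 1]) x =
            (fderiv ℝ f (f^[k] x)).comp (fderiv ℝ (f^[k]) x) := by
          rw [Function.iterate_succ']
          exact fderiv_comp x (hf.differentiable one_ne_zero _)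
            ((contDiff_iterate f hf k).differentiable one_ne_zero _)
        have hd : ‖fderiv ℝ f (f^[k] x)‖ ≤ M := by
          have := hper.iterate_mod_apply k
          rw [← this]
          exact hMi _ (Nat.mod_lt _ (by omega))
        calc ‖fderiv ℝ (f^[k + 1]) x‖
            ≤ ‖fderiv ℝ f (f^[k] x)‖ * ‖fderiv ℝ (f^[k]) x‖ := by
              rw [hcomp]; exact ContinuousLinearMap.opNorm_comp_le _ _
          _ ≤ M * M ^ k := by
              apply mul_le_mul hd ih (norm_nonneg _) (by linarith)
          _ = M ^ (k + 1) := by ring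
  set u : ℕ → ℝ := fun k => Real.log (conorm (fderiv ℝ (f^[k]) x)) / k with hu
  have hub : ∀ k : ℕ, 1 ≤ k → u k ≤ Real.log M := by
    intro k hk
    have h1 : conorm (fderiv ℝ (f^[k]) x) ≤ M ^ k :=
      (conorm_le_norm _ hvn).trans (hnorm k)
    have h2 : Real.log (conorm (fderiv ℝ (f^[k]) x)) ≤ k * Real.log M := by
      calc Real.log (conorm (fderiv ℝ (f^[k]) x)) ≤ Real.log (M ^ k) :=
            Real.log_le_log (hpos k) h1
        _ = k * Real.log M := Real.log_pow M k
    have hkpos : (0 : ℝ) < k := by exact_mod_cast hk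
    rw [hu]
    calc Real.log (conorm (fderiv ℝ (f^[k]) x)) / k ≤ (k * Real.log M) / k :=
          div_le_div_of_nonneg_right h2 hkpos.le
      _ = Real.log M := by field_simp
  have hlb : ∀ k : ℕ, 1 ≤ k → α - Real.log ℓ / k ≤ u k := by
    intro k hk
    have hkpos : (0 : ℝ) < k := by exact_mod_cast hk
    have h1 : Real.log ((1 / (ℓ : ℝ)) * Real.exp (k * α)) ≤
        Real.log (conorm (fderiv ℝ (f^[k]) x)) :=
      Real.log_le_log (by positivity) (hbd0 k)
    have h2 : Real.log ((1 / (ℓ : ℝ)) * Real.exp (k * α)) = -Real.log ℓ + k * α := by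
      rw [Real.log_mul (by positivity) (Real.exp_ne_zero _), Real.log_exp, one_div,
        Real.log_inv]
    have : (-Real.log ℓ + k * α) / k ≤ u k := by
      rw [hu, ← h2]
      exact div_le_div_of_nonneg_right h1 hkpos.le
    calc α - Real.log ℓ / k = (-Real.log ℓ + k * α) / k := by field_simp; ring
      _ ≤ u k := this
  have hlim : lyapMin f x = sInf {a | ∀ᶠ k in atTop, u k ≤ a} := by
    rw [lyapMin, Filter.limsup_eq]
  rw [hlim]
  apply le_csInf
  · exact ⟨Real.log M, eventually_atTop.mpr ⟨1, fun k hk => hub k hk⟩⟩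
  · intro a ha
    have htend : Tendsto (fun k : ℕ => α - Real.log ℓ / k) atTop (𝓝 α) := by
      have : Tendsto (fun k : ℕ => Real.log ℓ / k) atTop (𝓝 0) :=
        tendsto_const_div_atTop_nhds_zero_nat _
      simpa using tendsto_const_nhds.sub this
    apply le_of_tendsto htend
    filter_upwards [ha, eventually_ge_atTop 1] with k hk hk1
    exact (hlb k hk1).trans hk

/-- `K` is a uniformly expanding set (compact, forward invariant, contained in
`Λ_{α,ℓ}`), and for every `n ≥ 1`, `Fix(fⁿ) ∩ K ∩ EFix(fⁿ) = EFix(fⁿ, α, ℓ)`. -/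
theorem stmt3 (f : E → E) (hf : ContDiff ℝ 1 f)
    (α : ℝ) (hα : 0 < α) (ℓ : ℕ) (hℓ : 1 ≤ ℓ)
    (Λ : Set E) (hΛ : IsCompact Λ) (hinv : Set.MapsTo f Λ Λ)
    (hsub : ∀ n : ℕ, EFixSet f (n + 1) α ℓ ⊆ Λ) :
    (IsCompact (Kset f α ℓ) ∧ Set.MapsTo f (Kset f α ℓ) (Kset f α ℓ) ∧
        Kset f α ℓ ⊆ LambdaSet f α ℓ) ∧
      ∀ n : ℕ, 1 ≤ n →
        {x | f^[n] x = x} ∩ Kset f α ℓ ∩ {x | f^[n] x = x ∧ 0 < lyapMin f x} =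
          EFixSet f n α ℓ := by
  have hUsub : (⋃ n : ℕ, EFixSet f (n + 1) α ℓ) ⊆ Λ := Set.iUnion_subset hsub
  have hKΛ : Kset f α ℓ ⊆ Λ := by
    rw [Kset]
    exact closure_minimal hUsub hΛ.isClosed
  have hKcompact : IsCompact (Kset f α ℓ) :=
    hΛ.of_isClosed_subset isClosed_closure hKΛ
  have hKmaps : Set.MapsTo f (Kset f α ℓ) (Kset f α ℓ) := by
    have hU : Set.MapsTo f (⋃ n : ℕ, EFixSet f (n + 1) α ℓ)
        (⋃ n : ℕ, EFixSet f (n + 1) α ℓ) := by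
      intro x hx
      obtain ⟨n, hn⟩ := Set.mem_iUnion.mp hx
      exact Set.mem_iUnion.mpr ⟨n, efix_mapsTo f (n + 1) α ℓ hn⟩
    exact hU.closure hf.continuous
  have hKlambda : Kset f α ℓ ⊆ LambdaSet f α ℓ := by
    have hclosed : IsClosed (LambdaSet f α ℓ) := by
      have : LambdaSet f α ℓ = ⋂ k : ℕ,
          {x | (1 / (ℓ : ℝ)) * Real.exp (k * α) ≤ conorm (fderiv ℝ (f^[k]) x)} := by
        ext x; simp [LambdaSet, Set.mem_iInter]
      rw [this]
      apply isClosed_iInter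
      intro k
      exact isClosed_le continuous_const
        (conorm_continuous.comp ((contDiff_iterate f hf k).continuous_fderiv one_ne_zero))
    apply closure_minimal _ hclosed
    intro x hx
    obtain ⟨n, hn⟩ := Set.mem_iUnion.mp hx
    intro k
    have := hn.2 k 0 (by omega)
    simpa using this
  refine ⟨⟨hKcompact, hKmaps, hKlambda⟩, ?_⟩
  intro n hn
  obtain ⟨m, rfl⟩ : ∃ m : ℕ, n = m + 1 := ⟨n - 1, by omega⟩
  ext x
  constructor
  · rintro ⟨⟨hfix, hK⟩, -, -⟩
    refine ⟨hfix, ?_⟩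
    intro k i _
    have hxi : f^[i] x ∈ Kset f α ℓ := hKmaps.iterate i hK
    exact hKlambda hxi k
  · intro hx
    refine ⟨⟨hx.1, subset_closure (Set.mem_iUnion.mpr ⟨m, hx⟩)⟩, hx.1, ?_⟩
    exact lt_of_lt_of_le hα (lyap_ge f hf hα hℓ (by omega) hx)
end

section
/- (Pliss-type hyperbolic times) If x satisfies liminf_{n→∞} (1/n) Σ_{k=0}^{n−1} a_k ≥ β > α > 0, where a_k = log ‖(df(fᵏ(x)))⁻¹‖⁻¹ is a bounded sequence, then there exist infinitely many m ∈ ℕ which are hyperbolic times for x with exponent α, i.e., Σ_{j=m−k}^{m−1} a_j ≥ kα for every 1 ≤ k ≤ m. -/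
open Filter

/-- Pliss-type hyperbolic times: if `(a_k)` is bounded above by `A` and
`liminf_n (1/n) ∑_{k<n} a_k ≥ β > α > 0`, then there are infinitely many `m ∈ ℕ`
which are hyperbolic times with exponent `α`, i.e. `∑_{j=m-k}^{m-1} a_j ≥ kα` for
every `1 ≤ k ≤ m`. -/
theorem stmt13 (a : ℕ → ℝ) (A : ℝ) (hA : ∀ k, a k ≤ A) (α β : ℝ)
    (hα : 0 < α) (hαβ : α < β)
    (hliminf : β ≤ Filter.atTop.liminf (fun n : ℕ => (∑ k ∈ Finset.range n, a k) / n)) :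
    {m : ℕ | ∀ k : ℕ, 1 ≤ k → k ≤ m →
      (k : ℝ) * α ≤ ∑ j ∈ Finset.Ico (m - k) m, a j}.Infinite := by
  classical
  set S : ℕ → ℝ := fun n => (∑ k ∈ Finset.range n, a k) - n * α with hSdef
  -- key: partial sums of `a k - α` are unbounded above
  have key : ∀ M : ℝ, ∃ n : ℕ, M < S n := by
    intro M
    -- extract an eventual lower bound `c > α` for the averages
    have h1 : ∃ c : ℝ, α < c ∧ ∀ᶠ n in atTop, c ≤ (∑ k ∈ Finset.range n, a k) / n := by
      rw [Filter.liminf_eq] at hliminf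
      rcases Set.eq_empty_or_nonempty
          {c : ℝ | ∀ᶠ n in atTop, c ≤ (∑ k ∈ Finset.range n, a k) / n} with he | hne
      · rw [he, Real.sSup_empty] at hliminf
        linarith
      · obtain ⟨c, hc, hαc⟩ := exists_lt_of_lt_csSup hne (lt_of_lt_of_le hαβ hliminf)
        exact ⟨c, hαc, hc⟩
    obtain ⟨c, hαc, hev⟩ := h1
    obtain ⟨N0, hN0⟩ := (Filter.eventually_atTop.1 hev)
    obtain ⟨n0, hn0⟩ := exists_nat_gt (M / (c - α))
    refine ⟨max (max N0 1) n0, ?_⟩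
    set n := max (max N0 1) n0 with hn
    have hn1 : 1 ≤ n := le_trans (le_max_right N0 1) (le_max_left _ _)
    have hnpos : (0 : ℝ) < n := by exact_mod_cast hn1
    have hcle : c ≤ (∑ k ∈ Finset.range n, a k) / n :=
      hN0 n (le_trans (le_max_left N0 1) (le_max_left _ _))
    have hsum : c * n ≤ ∑ k ∈ Finset.range n, a k := by
      rw [le_div_iff₀ hnpos] at hcle; exact hcle
    have hnn0 : (n0 : ℝ) ≤ n := by exact_mod_cast le_max_right _ n0
    have : M < (c - α) * n := by
      rw [div_lt_iff₀ (by linarith : (0:ℝ) < c - α)] at hn0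
      calc M < n0 * (c - α) := hn0
        _ ≤ (c - α) * n := by nlinarith
    simp only [hSdef]
    nlinarith
  -- the set of records is infinite
  apply Set.infinite_of_not_bddAbove
  rintro ⟨N, hN⟩
  -- max of S over 0..N
  obtain ⟨M, hM⟩ : ∃ M : ℝ, ∀ j ≤ N, S j ≤ M := by
    refine ⟨(Finset.range (N + 1)).sup' ⟨0, by simp⟩ S, fun j hj => ?_⟩
    exact Finset.le_sup' S (Finset.mem_range.2 (Nat.lt_succ_of_le hj))
  have hex : ∃ n, M < S n := key M
  set m := Nat.find hex with hm
  have hmS : M < S m := Nat.find_spec hex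
  have hmin : ∀ j < m, S j ≤ M := fun j hj => le_of_not_gt (Nat.find_min hex hj)
  have hmN : N < m := by
    by_contra h
    exact absurd hmS (not_lt.2 (hM m (le_of_not_gt h)))
  -- m is a record, hence a hyperbolic time
  have hmem : m ∈ {m : ℕ | ∀ k : ℕ, 1 ≤ k → k ≤ m →
      (k : ℝ) * α ≤ ∑ j ∈ Finset.Ico (m - k) m, a j} := by
    intro k hk1 hkm
    have hlt : m - k < m := Nat.sub_lt (lt_of_lt_of_le hk1 hkm) hk1
    have hSle : S (m - k) ≤ S m := le_of_lt (lt_of_le_of_lt (hmin _ hlt) hmS)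
    have hsub : ∑ j ∈ Finset.Ico (m - k) m, a j
        = (∑ j ∈ Finset.range m, a j) - ∑ j ∈ Finset.range (m - k), a j := by
      rw [Finset.sum_Ico_eq_sub _ (Nat.sub_le m k)]
    have hcast : ((m - k : ℕ) : ℝ) = (m : ℝ) - k := by
      exact Nat.cast_sub hkm
    simp only [hSdef] at hSle
    rw [hsub]
    rw [hcast] at hSle
    linarith
  exact absurd (hN hmem) (not_le.2 hmN)
end
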